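/- Let H be a real Hilbert space, D ⊆ H a symmetric dictionary with sup_{g∈D} ‖g‖ < ∞, and u ∈ K₁(D). Let K ⊆ H be a closed subspace with orthogonal projection P_K, and set r = u − P_K u. Then ‖r‖² ≤ ‖u‖_{K₁(D)} · sup_{g∈D} ⟨g, r⟩. -/

import Mathlib

open RealInnerProductSpace Pointwise

/-- `BOne D` is the closure of the convex symmetric hull of the dictionary `D`:
the closure of the set of finite linear combinations `∑ aᵢ • gᵢ` with `gᵢ ∈ D`
and `∑ |aᵢ| ≤ 1`. -/
noncomputable def BOne {H : Type*} [NormedAddCommGroup H] [InnerProductSpace ℝ H]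
    (D : Set H) : Set H :=
  closure {v : H | ∃ (n : ℕ) (a : Fin n → ℝ) (g : Fin n → H),
    (∀ i, g i ∈ D) ∧ (∑ i, |a i|) ≤ 1 ∧ v = ∑ i, a i • g i}

/-- Membership in the variation space `K₁(D)`. -/
noncomputable def memK1 {H : Type*} [NormedAddCommGroup H] [InnerProductSpace ℝ H]
    (D : Set H) (v : H) : Prop :=
  ∃ c : ℝ, 0 < c ∧ v ∈ c • BOne D

/-- The variation norm `‖v‖_{K₁(D)} = inf {c > 0 : v ∈ c • B₁(D)}`. -/
noncomputable def varNorm {H : Type*} [NormedAddCommGroup H] [InnerProductSpace ℝ H]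
    (D : Set H) (v : H) : ℝ :=
  sInf {c : ℝ | 0 < c ∧ v ∈ c • BOne D}

/-- Duality bound for the residual of an orthogonal projection: for `u ∈ K₁(D)`
and `r = u - P_K u`, one has `‖r‖² ≤ ‖u‖_{K₁(D)} · sup_{g∈D} ⟨g, r⟩`. -/
theorem stmt15 {H : Type*} [NormedAddCommGroup H] [InnerProductSpace ℝ H] [CompleteSpace H]
    (D : Set H) (hsym : ∀ g ∈ D, -g ∈ D)
    (hbdd : ∃ C : ℝ, ∀ g ∈ D, ‖g‖ ≤ C)
    (u : H) (hu : memK1 D u)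
    (K : Submodule ℝ H) [K.HasOrthogonalProjection]
    (r : H) (hr : r = u - (K.orthogonalProjectionOnto u : H)) :
    ‖r‖ ^ 2 ≤ varNorm D u * sSup ((fun g => ⟪g, r⟫) '' D) := by
  classical
  obtain ⟨C, hC⟩ := hbdd
  -- r is orthogonal to K
  have hrK : r ∈ Kᗮ := by rw [hr]; exact K.sub_starProjection_mem_orthogonal u
  have hPr : ⟪(K.orthogonalProjectionOnto u : H), r⟫ = 0 :=
    (Submodule.mem_orthogonal K r).1 hrK _ (K.orthogonalProjectionOnto u).2
  have hur : ‖r‖ ^ 2 = ⟪u, r⟫ := by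
    have hu' : u = r + (K.orthogonalProjectionOnto u : H) := by rw [hr]; abel
    rw [hu', inner_add_left, hPr, add_zero, real_inner_self_eq_norm_sq]
  set M := sSup ((fun g => ⟪g, r⟫) '' D) with hM
  rcases D.eq_empty_or_nonempty with hD | ⟨g₀, hg₀⟩
  · -- D empty : u = 0
    obtain ⟨c, hc, w, hw, hcw⟩ := hu
    have hw0 : w = 0 := by
      have : BOne D ⊆ {(0 : H)} := by
        rw [BOne]
        have : {v : H | ∃ (n : ℕ) (a : Fin n → ℝ) (g : Fin n → H),
            (∀ i, g i ∈ D) ∧ (∑ i, |a i|) ≤ 1 ∧ v = ∑ i, a i • g i} ⊆ {(0 : H)} := by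
          rintro v ⟨n, a, g, hg, ha, rfl⟩
          rcases Nat.eq_zero_or_pos n with rfl | hn
          · simp
          · exact absurd (hg ⟨0, hn⟩) (by simp [hD])
        exact (closure_minimal this isClosed_singleton)
      simpa using this hw
    have hu0 : u = 0 := by rw [← hcw, hw0]; simp
    have : M = 0 := by simp [hM, hD, Real.sSup_empty]
    rw [this, mul_zero, hur, hu0, inner_zero_left]
  · -- D nonempty
    have hbddA : BddAbove ((fun g => ⟪g, r⟫) '' D) := by
      refine ⟨C * ‖r‖, ?_⟩
      rintro x ⟨g, hg, rfl⟩
      calc ⟪g, r⟫ ≤ ‖g‖ * ‖r‖ := real_inner_le_norm g r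
        _ ≤ C * ‖r‖ := mul_le_mul_of_nonneg_right (hC g hg) (norm_nonneg r)
    have hle : ∀ g ∈ D, ⟪g, r⟫ ≤ M := fun g hg => le_csSup hbddA ⟨g, hg, rfl⟩
    have hM0 : 0 ≤ M := by
      have h1 := hle g₀ hg₀
      have h2 := hle (-g₀) (hsym g₀ hg₀)
      rw [inner_neg_left] at h2
      linarith
    -- duality bound on the hull
    have hhull : ∀ w ∈ BOne D, ⟪w, r⟫ ≤ M := by
      intro w hw
      have hcl : IsClosed {x : H | ⟪x, r⟫ ≤ M} :=
        isClosed_le (Continuous.inner continuous_id continuous_const) continuous_const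
      refine closure_minimal ?_ hcl hw
      rintro v ⟨n, a, g, hg, ha, rfl⟩
      have habs : ∀ i, |⟪g i, r⟫| ≤ M := by
        intro i
        refine abs_le.2 ⟨?_, hle _ (hg i)⟩
        have := hle (-(g i)) (hsym _ (hg i))
        rw [inner_neg_left] at this
        linarith
      calc ⟪∑ i, a i • g i, r⟫ = ∑ i, a i * ⟪g i, r⟫ := by
            rw [sum_inner]; simp [real_inner_smul_left]
        _ ≤ ∑ i, |a i| * M := by
            refine Finset.sum_le_sum fun i _ => ?_
            calc a i * ⟪g i, r⟫ ≤ |a i * ⟪g i, r⟫| := le_abs_self _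
              _ = |a i| * |⟪g i, r⟫| := abs_mul _ _
              _ ≤ |a i| * M := mul_le_mul_of_nonneg_left (habs i) (abs_nonneg _)
        _ = (∑ i, |a i|) * M := by rw [Finset.sum_mul]
        _ ≤ 1 * M := mul_le_mul_of_nonneg_right ha hM0
        _ = M := one_mul M
    -- ⟪u, r⟫ ≤ c * M for every admissible c
    have hkey : ∀ c ∈ {c : ℝ | 0 < c ∧ u ∈ c • BOne D}, ⟪u, r⟫ ≤ c * M := by
      rintro c ⟨hc, w, hw, rfl⟩
      rw [real_inner_smul_left]
      exact mul_le_mul_of_nonneg_left (hhull w hw) hc.le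
    have hne : {c : ℝ | 0 < c ∧ u ∈ c • BOne D}.Nonempty := by
      obtain ⟨c, hc, hm⟩ := hu; exact ⟨c, hc, hm⟩
    rw [hur, varNorm]
    rcases eq_or_lt_of_le hM0 with hM0' | hM0'
    · obtain ⟨c, hcmem⟩ := hne
      have := hkey c hcmem
      rw [← hM0'] at this ⊢
      simpa using this
    · have : ⟪u, r⟫ / M ≤ sInf {c : ℝ | 0 < c ∧ u ∈ c • BOne D} := by
        refine le_csInf hne fun c hc => ?_
        rw [div_le_iff₀ hM0']
        exact hkey c hc
      calc ⟪u, r⟫ = (⟪u, r⟫ / M) * M := by field_simp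
        _ ≤ sInf {c : ℝ | 0 < c ∧ u ∈ c • BOne D} * M :=
            mul_le_mul_of_nonneg_right this hM0
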